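/- Let p̄_rand = (p_rand(1), p_rand(2), …) be a random sequence with Prob(p_rand(i) = 0) = Prob(p_rand(i) = 1) = 1/2, independently for each i. Then with probability 1, the sequence p̄_rand has the following property: for every k there exists n₀ = n₀(k) such that for all n ≥ n₀ the (deterministic, given p̄_rand) graph G(n, p̄_rand) has property 𝒜_k; consequently, with probability 1, for every first-order sentence ψ of the language L the truth value of ψ in G(n, p̄_rand) is eventually constant in n, so a zero-one law holds for every ψ from L. -/

import Mathlib

open FirstOrder Filter

namespace RandomGraph

/-- The set of potential edges of a graph on `Fin n` (pairs `(v,w)` with `v < w`).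
Vertex `v : Fin n` represents the number `v + 1` of the interval `[n] = {1, …, n}`. -/
abbrev EdgeIdx (n : ℕ) := {e : Fin n × Fin n // e.1 < e.2}

/-- An outcome of the random graph on `[n]`: a choice of which potential edges are present. -/
abbrev Sample (n : ℕ) := EdgeIdx n → Bool

/-- Adjacency of two vertices (described by their values in `Fin n`) in the outcome `ω`. -/
def adjVal {n : ℕ} (ω : Sample n) (a b : ℕ) : Prop :=
  ∃ e : EdgeIdx n, ω e = true ∧
    ((e.1.1.val = a ∧ e.1.2.val = b) ∨ (e.1.1.val = b ∧ e.1.2.val = a))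

/-- Adjacency of two vertices in the outcome `ω`. -/
def sampleAdj {n : ℕ} (ω : Sample n) (v w : Fin n) : Prop := adjVal ω v.val w.val

/-- The probability of the outcome `ω` in the model `G(n, p̄)`: each pair of distinct
vertices at distance `d` is an edge with probability `p d`, independently.  (The value `p 0` is
never used, since distinct vertices are at distance at least 1.) -/
noncomputable def sampleWeight (p : ℕ → ℝ) {n : ℕ} (ω : Sample n) : ℝ :=
  ∏ e : EdgeIdx n,
    (if ω e then p (e.1.2.val - e.1.1.val) else 1 - p (e.1.2.val - e.1.1.val))

/-- The probability of the outcome `ω` in the circular model `C(n, p̄)`: vertices `v, w` are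
adjacent with probability `p (min |v-w| (n - |v-w|))`, independently. -/
noncomputable def cWeight (p : ℕ → ℝ) {n : ℕ} (ω : Sample n) : ℝ :=
  ∏ e : EdgeIdx n,
    (if ω e then p (min (e.1.2.val - e.1.1.val) (n - (e.1.2.val - e.1.1.val)))
      else 1 - p (min (e.1.2.val - e.1.1.val) (n - (e.1.2.val - e.1.1.val))))

open scoped Classical in
/-- The probability of the event `P` in the random graph `G(n, p̄)`. -/
noncomputable def Pr (p : ℕ → ℝ) (n : ℕ) (P : Sample n → Prop) : ℝ :=
  ∑ ω : Sample n, if P ω then sampleWeight p ω else 0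

open scoped Classical in
/-- The probability of the event `P` in the circular random graph `C(n, p̄)`. -/
noncomputable def cPr (p : ℕ → ℝ) (n : ℕ) (P : Sample n → Prop) : ℝ :=
  ∑ ω : Sample n, if P ω then cWeight p ω else 0

/-! ### The language `L` of graphs (also used as the language `L^c`) -/

/-- An outcome `ω` of the random graph, viewed as a structure of `FirstOrder.Language.graph`,
the language with a single binary adjacency predicate. -/
def graphStructure {n : ℕ} (ω : Sample n) : Language.graph.Structure (Fin n) where
  RelMap | .adj => fun x => sampleAdj ω (x 0) (x 1)

/-- Satisfaction of a sentence of the language `L` in the outcome `ω`. -/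
def SatL {n : ℕ} (ω : Sample n) (ψ : Language.graph.Sentence) : Prop :=
  @Language.Sentence.Realize _ _ (graphStructure ω) ψ

/-- `Prob(n, p̄; ψ)` for a sentence `ψ` of the language `L`. -/
noncomputable def ProbL (p : ℕ → ℝ) (n : ℕ) (ψ : Language.graph.Sentence) : ℝ :=
  Pr p n fun ω => SatL ω ψ

/-- The probability that `C(n, p̄)` satisfies a sentence `ψ` of the language `L^c = L`. -/
noncomputable def cProbL (p : ℕ → ℝ) (n : ℕ) (ψ : Language.graph.Sentence) : ℝ :=
  cPr p n fun ω => SatL ω ψ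

/-! ### The language `L₊` -/

/-- The constants of the language `L₊`: the first element `1` and the last element `n`. -/
inductive plusFunc : ℕ → Type
  | one : plusFunc 0
  | last : plusFunc 0

/-- The relations of `L₊`: adjacency and successor. -/
inductive plusRel : ℕ → Type
  | adj : plusRel 2
  | succ : plusRel 2

/-- The language `L₊` with adjacency, successor (`x = y + 1`), and constants `1` and `n`. -/
def Lplus : Language := ⟨plusFunc, plusRel⟩

/-- An outcome `ω` of the random graph on `[m+1]`, as an `L₊`-structure. -/
def plusStructure {m : ℕ} (ω : Sample (m + 1)) : Lplus.Structure (Fin (m + 1)) where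
  funMap | .one => fun _ => 0 | .last => fun _ => Fin.last m
  RelMap
    | .adj => fun x => sampleAdj ω (x 0) (x 1)
    | .succ => fun x => (x 0).val = (x 1).val + 1

/-- `Prob(n, p̄; ψ)` for a sentence `ψ` of `L₊` (set to `0` in the irrelevant case `n = 0`,
where the constants cannot be interpreted). -/
noncomputable def ProbPlus (p : ℕ → ℝ) : ℕ → Lplus.Sentence → ℝ
  | 0, _ => 0
  | (m + 1), ψ => Pr p (m + 1) fun ω => @Language.Sentence.Realize _ _ (plusStructure ω) ψ

/-! ### The language `L≤` -/

/-- The relations of `L≤`: adjacency and linear order. -/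
inductive leRel : ℕ → Type
  | adj : leRel 2
  | le : leRel 2

/-- The language `L≤` with adjacency and a linear order. -/
def Lle : Language := ⟨fun _ => Empty, leRel⟩

/-- An outcome `ω` of the random graph on `[n]`, as an `L≤`-structure. -/
def leStructure {n : ℕ} (ω : Sample n) : Lle.Structure (Fin n) where
  funMap := fun f _ => Empty.elim f
  RelMap
    | .adj => fun x => sampleAdj ω (x 0) (x 1)
    | .le => fun x => x 0 ≤ x 1

/-- Satisfaction of a sentence of `L≤` in the outcome `ω`. -/
def SatLe {n : ℕ} (ω : Sample n) (ψ : Lle.Sentence) : Prop :=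
  @Language.Sentence.Realize _ _ (leStructure ω) ψ

/-- `Prob(n, p̄; ψ)` for a sentence `ψ` of `L≤`. -/
noncomputable def ProbLe (p : ℕ → ℝ) (n : ℕ) (ψ : Lle.Sentence) : ℝ :=
  Pr p n fun ω => SatLe ω ψ

/-! ### The circular languages `L₊^c` and `L≤^c` -/

/-- The relations of `L₊^c`: adjacency and cyclic successor. -/
inductive plusCRel : ℕ → Type
  | adj : plusCRel 2
  | succ : plusCRel 2

/-- The language `L₊^c`, with adjacency and cyclic successor (`x = y + 1 (mod n)`). -/
def LplusC : Language := ⟨fun _ => Empty, plusCRel⟩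

/-- An outcome `ω` of the circular random graph on `[n]`, as an `L₊^c`-structure. -/
def plusCStructure {n : ℕ} (ω : Sample n) : LplusC.Structure (Fin n) where
  funMap := fun f _ => Empty.elim f
  RelMap
    | .adj => fun x => sampleAdj ω (x 0) (x 1)
    | .succ => fun x => (x 0).val = ((x 1).val + 1) % n

/-- The probability that `C(n, p̄)` satisfies a sentence `ψ` of the language `L₊^c`. -/
noncomputable def cProbPlus (p : ℕ → ℝ) (n : ℕ) (ψ : LplusC.Sentence) : ℝ :=
  cPr p n fun ω => @Language.Sentence.Realize _ _ (plusCStructure ω) ψ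

/-- The relations of `L≤^c`: adjacency and the ternary clockwise-order predicate. -/
inductive cycRel : ℕ → Type
  | adj : cycRel 2
  | btw : cycRel 3

/-- The language `L≤^c`, with adjacency and the ternary clockwise-order predicate `C`. -/
def Lcyc : Language := ⟨fun _ => Empty, cycRel⟩

/-- `C(a, b, c)`: `a ≤ b ≤ c` holds after some cyclic permutation of `(a, b, c)`. -/
def cyclicBtw {n : ℕ} (a b c : Fin n) : Prop :=
  (a ≤ b ∧ b ≤ c) ∨ (b ≤ c ∧ c ≤ a) ∨ (c ≤ a ∧ a ≤ b)

/-- An outcome `ω` of the circular random graph on `[n]`, as an `L≤^c`-structure. -/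
def cycStructure {n : ℕ} (ω : Sample n) : Lcyc.Structure (Fin n) where
  funMap := fun f _ => Empty.elim f
  RelMap
    | .adj => fun x => sampleAdj ω (x 0) (x 1)
    | .btw => fun x => cyclicBtw (x 0) (x 1) (x 2)

/-- Satisfaction of a sentence of `L≤^c` in the outcome `ω`. -/
def SatCyc {n : ℕ} (ω : Sample n) (ψ : Lcyc.Sentence) : Prop :=
  @Language.Sentence.Realize _ _ (cycStructure ω) ψ

/-- The probability that `C(n, p̄)` satisfies a sentence `ψ` of the language `L≤^c`. -/
noncomputable def cProbCyc (p : ℕ → ℝ) (n : ℕ) (ψ : Lcyc.Sentence) : ℝ :=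
  cPr p n fun ω => SatCyc ω ψ


/-- The deterministic graph `G(n, p̄)` determined by a zero-one sequence `p̄` (encoded as a
function `b : ℕ → Bool`, `b i = true` meaning `p i = 1`): vertices `v ≠ w` are adjacent
exactly when `p |v - w| = 1`. -/
def bitsGraph (b : ℕ → Bool) (n : ℕ) : SimpleGraph (Fin n) where
  Adj v w := v ≠ w ∧ b (Nat.dist v.val w.val) = true
  symm := ⟨by
    rintro v w ⟨h1, h2⟩
    exact ⟨h1.symm, by rwa [Nat.dist_comm]⟩⟩
  loopless := ⟨fun v h => h.1 rfl⟩

/-- The property `𝒜_k`: for every set `A` of exactly `k` vertices and every `A' ⊆ A` there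
is a vertex adjacent to all vertices of `A'` and to no vertex of `A \ A'`. -/
def HasPropA (k : ℕ) {n : ℕ} (G : SimpleGraph (Fin n)) : Prop :=
  ∀ A : Finset (Fin n), A.card = k → ∀ A' ⊆ A,
    ∃ v : Fin n, (∀ a ∈ A', G.Adj v a) ∧ (∀ a ∈ A, a ∉ A' → ¬ G.Adj v a)


/-! ### Auxiliary definitions and lemmas -/

open MeasureTheory ProbabilityTheory

lemma dist_eq_dist {x a a' : ℕ} (h : Nat.dist x a = Nat.dist x a') (hne : a ≠ a') :
    x + x = a + a' := by
  have h1 : Nat.dist x a = (x - a) + (a - x) := rfl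
  have h2 : Nat.dist x a' = (x - a') + (a' - x) := rfl
  omega

lemma dist_cases {x a d : ℕ} (h : Nat.dist x a = d) : x = a + d ∨ x = a - d := by
  have h1 : Nat.dist x a = (x - a) + (a - x) := rfl
  omega

/-- Greedy construction of a large set of vertices with pairwise disjoint,
injective distance patterns to `A`. -/
lemma greedy {k n : ℕ} (A : Finset (Fin n)) (hA : A.card ≤ k) :
    ∃ V : Finset (Fin n), V.card = n / (3 * k ^ 2 + k + 1) ∧
      (∀ v ∈ V, v ∉ A) ∧
      (∀ v ∈ V, ∀ a ∈ A, ∀ a' ∈ A, a ≠ a' → Nat.dist v.1 a.1 ≠ Nat.dist v.1 a'.1) ∧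
      (∀ v ∈ V, ∀ v' ∈ V, v ≠ v' → ∀ a ∈ A, ∀ a' ∈ A,
        Nat.dist v.1 a.1 ≠ Nat.dist v'.1 a'.1) := by
  classical
  set c := 3 * k ^ 2 + k + 1 with hc
  suffices h : ∀ m, m ≤ n / c → ∃ V : Finset (Fin n), V.card = m ∧
      (∀ v ∈ V, v ∉ A) ∧
      (∀ v ∈ V, ∀ a ∈ A, ∀ a' ∈ A, a ≠ a' → Nat.dist v.1 a.1 ≠ Nat.dist v.1 a'.1) ∧
      (∀ v ∈ V, ∀ v' ∈ V, v ≠ v' → ∀ a ∈ A, ∀ a' ∈ A,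
        Nat.dist v.1 a.1 ≠ Nat.dist v'.1 a'.1) from h _ le_rfl
  intro m
  induction m with
  | zero => exact fun _ => ⟨∅, by simp⟩
  | succ m ih =>
    intro hm
    obtain ⟨V, hVcard, hV1, hV2, hV3⟩ := ih (le_trans (Nat.le_succ m) hm)
    set Bad : Finset ℕ :=
      ((A.image fun a => a.1) ∪
      ((A ×ˢ A).image fun p => (p.1.1 + p.2.1) / 2) ∪
      ((V ×ˢ A ×ˢ A).image fun p => p.2.1.1 + Nat.dist p.1.1 p.2.2.1) ∪
      ((V ×ˢ A ×ˢ A).image fun p => p.2.1.1 - Nat.dist p.1.1 p.2.2.1)) ∪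
      (V.image fun v => v.1) with hBad
    have hk2 : A.card * A.card ≤ k ^ 2 := by
      rw [pow_two]; exact Nat.mul_le_mul hA hA
    have hprod : ∀ f : Fin n × Fin n × Fin n → ℕ,
        ((V ×ˢ A ×ˢ A).image f).card ≤ m * k ^ 2 := by
      intro f
      refine le_trans Finset.card_image_le ?_
      rw [Finset.card_product, Finset.card_product, hVcard]
      exact Nat.mul_le_mul_left m hk2
    have hBadcard : Bad.card ≤ k + k ^ 2 + m * k ^ 2 + m * k ^ 2 + m := by
      refine le_trans (Finset.card_union_le _ _) (Nat.add_le_add ?_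
        (le_trans Finset.card_image_le (le_of_eq hVcard)))
      refine le_trans (Finset.card_union_le _ _) (Nat.add_le_add ?_ (hprod _))
      refine le_trans (Finset.card_union_le _ _) (Nat.add_le_add ?_ (hprod _))
      refine le_trans (Finset.card_union_le _ _) (Nat.add_le_add
        (le_trans Finset.card_image_le hA) (le_trans Finset.card_image_le ?_))
      rw [Finset.card_product]; exact hk2
    have hcm : c * (m + 1) ≤ n := by
      calc c * (m + 1) ≤ c * (n / c) := Nat.mul_le_mul_left c hm
      _ ≤ n := Nat.mul_div_le n c
    have hBadlt : Bad.card < n := by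
      have hck : c * (m + 1) = 3 * k ^ 2 * m + k * m + m + 3 * k ^ 2 + k + 1 := by ring
      nlinarith [hBadcard, hcm, sq_nonneg k]
    have hex : ∃ x, x ∈ Finset.range n \ Bad := by
      apply Finset.card_pos.mp
      have := Finset.le_card_sdiff Bad (Finset.range n)
      rw [Finset.card_range] at this
      omega
    obtain ⟨x, hx⟩ := hex
    rw [Finset.mem_sdiff, Finset.mem_range] at hx
    obtain ⟨hxn, hxBad⟩ := hx
    set v₀ : Fin n := ⟨x, hxn⟩ with hv₀
    have hin : ∀ s : Finset ℕ,
        (s ⊆ (A.image fun a => a.1) ∪ ((A ×ˢ A).image fun p => (p.1.1 + p.2.1) / 2) ∪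
          ((V ×ˢ A ×ˢ A).image fun p => p.2.1.1 + Nat.dist p.1.1 p.2.2.1) ∪
          ((V ×ˢ A ×ˢ A).image fun p => p.2.1.1 - Nat.dist p.1.1 p.2.2.1)) → x ∉ s := by
      intro s hs hmem
      exact hxBad (Finset.mem_union_left _ (hs hmem))
    have hv₀A : v₀ ∉ A := fun hmem =>
      hxBad (Finset.mem_union_left _ (Finset.mem_union_left _ (Finset.mem_union_left _
        (Finset.mem_union_left _ (Finset.mem_image_of_mem _ hmem)))))
    have hv₀V : v₀ ∉ V := fun hmem =>
      hxBad (Finset.mem_union_right _ (Finset.mem_image_of_mem _ hmem))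
    -- key cross-distance fact
    have hcross : ∀ v' ∈ V, ∀ a ∈ A, ∀ a' ∈ A, Nat.dist x a.1 ≠ Nat.dist v'.1 a'.1 := by
      intro v' hv' a ha a' ha' heq
      rcases dist_cases heq with h | h
      · refine hxBad (Finset.mem_union_left _ (Finset.mem_union_left _
          (Finset.mem_union_right _ ?_)))
        refine Finset.mem_image.mpr ⟨(v', a, a'), ?_, h.symm⟩
        simp [Finset.mem_product, hv', ha, ha']
      · refine hxBad (Finset.mem_union_left _ (Finset.mem_union_right _ ?_))
        refine Finset.mem_image.mpr ⟨(v', a, a'), ?_, h.symm⟩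
        simp [Finset.mem_product, hv', ha, ha']
    refine ⟨insert v₀ V, ?_, ?_, ?_, ?_⟩
    · rw [Finset.card_insert_of_notMem hv₀V, hVcard]
    · intro v hv
      rcases Finset.mem_insert.mp hv with rfl | hv
      · exact hv₀A
      · exact hV1 v hv
    · intro v hv a ha a' ha' hne heq
      rcases Finset.mem_insert.mp hv with rfl | hv
      · have h2 := dist_eq_dist heq (fun h => hne (Fin.val_injective h))
        have hvx : (v₀ : ℕ) = x := rfl
        rw [hvx] at h2
        refine hxBad (Finset.mem_union_left _ (Finset.mem_union_left _
          (Finset.mem_union_left _ (Finset.mem_union_right _ ?_))))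
        refine Finset.mem_image.mpr ⟨(a, a'), Finset.mem_product.mpr ⟨ha, ha'⟩, ?_⟩
        show ((a:ℕ) + (a':ℕ)) / 2 = x
        omega
      · exact hV2 v hv a ha a' ha' hne heq
    · intro v hv v' hv' hne a ha a' ha' heq
      rcases Finset.mem_insert.mp hv with rfl | hv <;>
        rcases Finset.mem_insert.mp hv' with rfl | hv'
      · exact hne rfl
      · exact hcross v' hv' a ha a' ha' heq
      · exact hcross v hv a' ha' a ha heq.symm
      · exact hV3 v hv v' hv' hne a ha a' ha' heq


/-- Strong extension property: for every `A` of size at most `k` and `A' ⊆ A` there is a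
vertex outside `A` adjacent to exactly `A'` within `A`. -/
def ExtendsA {V : Type*} (k : ℕ) (G : SimpleGraph V) : Prop :=
  ∀ A : Finset V, A.card ≤ k → ∀ A' ⊆ A,
    ∃ v, v ∉ A ∧ (∀ a ∈ A', G.Adj v a) ∧ (∀ a ∈ A, a ∉ A' → ¬ G.Adj v a)

/-- Quantifier depth of a bounded formula. -/
def qd {L : Language} : ∀ {α : Type*} {m : ℕ}, L.BoundedFormula α m → ℕ
  | _, _, .falsum => 0
  | _, _, .equal _ _ => 0
  | _, _, .rel _ _ => 0
  | _, _, .imp f g => max (qd f) (qd g)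
  | _, _, .all f => qd f + 1

lemma graph_term_eq {α : Type*} (t : Language.graph.Term α) :
    ∃ i, t = Language.Term.var i := by
  cases t with
  | var x => exact ⟨x, rfl⟩
  | func f ts => exact isEmptyElim f

/-- Partial isomorphism between tuples. -/
def PartIso {V W : Type*} (G : SimpleGraph V) (H : SimpleGraph W) {m : ℕ}
    (xs : Fin m → V) (ys : Fin m → W) : Prop :=
  ∀ i j, (xs i = xs j ↔ ys i = ys j) ∧ (G.Adj (xs i) (xs j) ↔ H.Adj (ys i) (ys j))

lemma PartIso.symm {V W : Type*} {G : SimpleGraph V} {H : SimpleGraph W} {m : ℕ}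
    {xs : Fin m → V} {ys : Fin m → W} (h : PartIso G H xs ys) : PartIso H G ys xs :=
  fun i j => ⟨(h i j).1.symm, (h i j).2.symm⟩

lemma extend {V W : Type*} {G : SimpleGraph V} {H : SimpleGraph W} {K m : ℕ}
    (hG : ExtendsA K G) {xs : Fin m → V} {ys : Fin m → W}
    (h : PartIso G H xs ys) (hm : m ≤ K) (w : W) :
    ∃ v, PartIso G H (Fin.snoc xs v) (Fin.snoc ys w) := by
  classical
  by_cases hw : ∃ i₀, ys i₀ = w
  · obtain ⟨i₀, hi₀⟩ := hw
    refine ⟨xs i₀, fun i j => ?_⟩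
    refine Fin.lastCases ?_ ?_ i <;> [skip; (intro i')] <;>
      refine Fin.lastCases ?_ ?_ j <;> [skip; (intro j'); skip; (intro j')] <;>
      simp only [Fin.snoc_last, Fin.snoc_castSucc, ← hi₀]
    · simp [SimpleGraph.irrefl]
    · exact h i₀ j'
    · exact h i' i₀
    · exact h i' j'
  · push_neg at hw
    set A : Finset V := Finset.image xs Finset.univ with hA
    set A' : Finset V := Finset.image xs (Finset.univ.filter fun i => H.Adj w (ys i)) with hA'
    have hAcard : A.card ≤ K :=
      le_trans (Finset.card_image_le.trans (by simp)) hm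
    obtain ⟨v, hvA, hpos, hneg⟩ := hG A hAcard A'
      (Finset.image_subset_image (Finset.filter_subset _ _))
    have hvne : ∀ i, v ≠ xs i := fun i hvi =>
      hvA (hvi ▸ Finset.mem_image_of_mem xs (Finset.mem_univ i))
    have key : ∀ i, G.Adj v (xs i) ↔ H.Adj w (ys i) := by
      intro i
      constructor
      · intro hadj
        by_contra hnadj
        have hnA' : xs i ∉ A' := by
          simp only [hA', Finset.mem_image, Finset.mem_filter] at *
          rintro ⟨j, ⟨-, hj⟩, hji⟩
          exact hnadj (((h j i).1.mp hji) ▸ hj)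
        exact hneg (xs i) (Finset.mem_image_of_mem xs (Finset.mem_univ i)) hnA' hadj
      · intro hadj
        exact hpos (xs i)
          (Finset.mem_image_of_mem xs (Finset.mem_filter.mpr ⟨Finset.mem_univ i, hadj⟩))
    refine ⟨v, fun i j => ?_⟩
    refine Fin.lastCases ?_ ?_ i <;> [skip; (intro i')] <;>
      refine Fin.lastCases ?_ ?_ j <;> [skip; (intro j'); skip; (intro j')] <;>
      simp only [Fin.snoc_last, Fin.snoc_castSucc]
    · simp [SimpleGraph.irrefl]
    · exact ⟨iff_of_false (hvne j') (fun hh => hw j' hh.symm), key j'⟩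
    · exact ⟨iff_of_false (fun hh => hvne i' hh.symm) (hw i'),
        (G.adj_comm (xs i') v).trans ((key i').trans (H.adj_comm w (ys i')))⟩
    · exact h i' j'

lemma ef_main {V W : Type*} {G : SimpleGraph V} {H : SimpleGraph W} {K : ℕ}
    (hG : ExtendsA K G) (hH : ExtendsA K H) :
    ∀ {m : ℕ} (φ : Language.graph.BoundedFormula Empty m), m + qd φ ≤ K →
    ∀ (xs : Fin m → V) (ys : Fin m → W), PartIso G H xs ys →
    ∀ (vG : Empty → V) (vH : Empty → W),
    (@Language.BoundedFormula.Realize _ V G.structure _ _ φ vG xs ↔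
      @Language.BoundedFormula.Realize _ W H.structure _ _ φ vH ys) := by
  intro m φ
  induction φ with
  | falsum =>
    intro _ xs ys _ vG vH
    exact Iff.rfl
  | equal t₁ t₂ =>
    intro _ xs ys hiso vG vH
    obtain ⟨x₁, rfl⟩ := graph_term_eq t₁
    obtain ⟨x₂, rfl⟩ := graph_term_eq t₂
    cases x₁ with
    | inl e => exact e.elim
    | inr i =>
      cases x₂ with
      | inl e => exact e.elim
      | inr j =>
        exact (hiso i j).1
  | rel R ts =>
    intro _ xs ys hiso vG vH
    letI := G.structure
    letI := H.structure
    cases R with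
    | adj =>
      obtain ⟨x₁, e₁⟩ := graph_term_eq (ts 0)
      obtain ⟨x₂, e₂⟩ := graph_term_eq (ts 1)
      cases x₁ with
      | inl e => exact e.elim
      | inr i =>
      cases x₂ with
      | inl e => exact e.elim
      | inr j =>
      show G.Adj (Language.Term.realize (Sum.elim vG xs) (ts 0))
          (Language.Term.realize (Sum.elim vG xs) (ts 1)) ↔
        H.Adj (Language.Term.realize (Sum.elim vH ys) (ts 0))
          (Language.Term.realize (Sum.elim vH ys) (ts 1))
      rw [e₁, e₂]
      exact (hiso i j).2
  | imp f g ihf ihg =>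
    intro hle xs ys hiso vG vH
    simp only [Language.BoundedFormula.realize_imp]
    rw [ihf (by simp only [qd] at hle ⊢; omega) xs ys hiso vG vH,
      ihg (by simp only [qd] at hle ⊢; omega) xs ys hiso vG vH]
  | all f ih =>
    intro hle xs ys hiso vG vH
    have hle' := hle
    simp only [qd] at hle'
    simp only [Language.BoundedFormula.realize_all]
    constructor
    · intro hall w
      obtain ⟨v, hpi⟩ := extend hG hiso (by omega) w
      exact (ih (by omega) _ _ hpi vG vH).mp (hall v)
    · intro hall v
      obtain ⟨w, hpi⟩ := extend hH hiso.symm (by omega) v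
      exact (ih (by omega) _ _ hpi.symm vG vH).mpr (hall w)

lemma ef_sentence {V W : Type*} {G : SimpleGraph V} {H : SimpleGraph W}
    (ψ : Language.graph.Sentence) {K : ℕ} (hK : qd ψ ≤ K)
    (hG : ExtendsA K G) (hH : ExtendsA K H) :
    (@Language.Sentence.Realize _ V G.structure ψ ↔ @Language.Sentence.Realize _ W H.structure ψ) := by
  exact ef_main hG hH ψ (by omega) default default (fun i j => i.elim0) default default


variable {Ω : Type} [MeasurableSpace Ω] {μ : Measure Ω} [IsProbabilityMeasure μ]
  {X : ℕ → Ω → Bool}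

lemma bit_half (hmeas : ∀ i, Measurable (X i)) (hdist : ∀ i, μ {ω | X i ω = true} = 1 / 2)
    (i : ℕ) (b : Bool) : μ (X i ⁻¹' {b}) = 1 / 2 := by
  have htrue : X i ⁻¹' {true} = {ω | X i ω = true} := by ext ω; simp
  cases b
  · have hfalse : X i ⁻¹' {false} = (X i ⁻¹' {true})ᶜ := by
      ext ω
      simp only [Set.mem_preimage, Set.mem_singleton_iff, Set.mem_compl_iff]
      cases X i ω <;> simp
    rw [hfalse, measure_compl (hmeas i (by trivial)) (measure_ne_top μ _), measure_univ,
      htrue, hdist i, one_div, ENNReal.one_sub_inv_two]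
  · rw [htrue]; exact hdist i

lemma meas_atom (hmeas : ∀ i, Measurable (X i))
    (hindep : iIndepFun X μ)
    (hdist : ∀ i, μ {ω | X i ω = true} = 1 / 2)
    (J : Finset ℕ) (σ : ℕ → Bool) :
    μ {ω | ∀ i ∈ J, X i ω = σ i} = (1 / 2 : ENNReal) ^ J.card := by
  have hset : {ω | ∀ i ∈ J, X i ω = σ i} = ⋂ i ∈ J, X i ⁻¹' {σ i} := by
    ext ω; simp
  rw [hset, hindep.meas_biInter (fun i _ => ⟨{σ i}, trivial, rfl⟩)]
  rw [Finset.prod_congr rfl (fun i _ => bit_half hmeas hdist i (σ i))]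
  rw [Finset.prod_const]

lemma measurableSet_pi_bool {ι : Type*} [Finite ι] (s : Set (ι → Bool)) :
    MeasurableSet s := by
  have h1 : ∀ g : ι → Bool, MeasurableSet {g} := by
    intro g
    have : {g} = ⋂ i, (fun x : ι → Bool => x i) ⁻¹' {g i} := by
      ext y; simp [funext_iff, Set.mem_iInter]
    rw [this]
    have : Countable ι := Countable.of_equiv _ (Equiv.refl ι)
    exact MeasurableSet.iInter fun i => (measurable_pi_apply i) (by trivial)
  have : s = ⋃ g ∈ s, {g} := by simp
  rw [this]
  exact MeasurableSet.biUnion (Set.to_countable s) fun g _ => h1 g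

/-- The atom set is measurable. -/
lemma measurableSet_atom (hmeas : ∀ i, Measurable (X i)) (J : Finset ℕ) (σ : ℕ → Bool) :
    MeasurableSet {ω | ∀ i ∈ J, X i ω = σ i} := by
  have hset : {ω | ∀ i ∈ J, X i ω = σ i} = ⋂ i ∈ J, X i ⁻¹' {σ i} := by
    ext ω; simp
  rw [hset]
  exact MeasurableSet.biInter (J.countable_toSet) fun i _ => hmeas i (by trivial)

/-- Key inductive bound: probability that every `v ∈ V` "fails" is at most `q ^ |V|`,
where blocks `S v` are pairwise disjoint. -/
lemma fail_bound (hmeas : ∀ i, Measurable (X i))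
    (hindep : iIndepFun X μ)
    (hdist : ∀ i, μ {ω | X i ω = true} = 1 / 2)
    {k n : ℕ} (S : Fin n → Finset ℕ) (τ : ℕ → Bool) :
    ∀ V : Finset (Fin n), (∀ v ∈ V, (S v).card ≤ k) →
    (∀ v ∈ V, ∀ v' ∈ V, v ≠ v' → Disjoint (S v) (S v')) →
    μ (⋂ v ∈ V, {ω | ¬ ∀ i ∈ S v, X i ω = τ i}) ≤
      (1 - (1 / 2 : ENNReal) ^ k) ^ V.card := by
  classical
  intro V
  induction V using Finset.induction_on with
  | empty => intro _ _; simp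
  | @insert v₀ V hv₀V ih =>
    intro hcard hdisj
    rw [Finset.set_biInter_insert]
    set T := V.biUnion S with hT
    have hST : Disjoint (S v₀) T := by
      rw [hT, Finset.disjoint_biUnion_right]
      exact fun v hv => hdisj v₀ (Finset.mem_insert_self _ _) v
        (Finset.mem_insert_of_mem hv) (fun h => hv₀V (h ▸ hv))
    -- the two events as preimages
    set Y₁ : Ω → ({x // x ∈ S v₀} → Bool) := fun ω i => X i.1 ω with hY₁
    set Y₂ : Ω → ({x // x ∈ T} → Bool) := fun ω i => X i.1 ω with hY₂
    set A₁ : Set ({x // x ∈ S v₀} → Bool) := {g | ¬ ∀ i : {x // x ∈ S v₀}, g i = τ i.1}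
      with hA₁
    set A₂ : Set ({x // x ∈ T} → Bool) :=
      {g | ∀ v ∈ V, ¬ ∀ i : {x // x ∈ T}, i.1 ∈ S v → g i = τ i.1} with hA₂
    have he₁ : {ω | ¬ ∀ i ∈ S v₀, X i ω = τ i} = Y₁ ⁻¹' A₁ := by
      ext ω; simp [hA₁, hY₁, Subtype.forall]
    have he₂ : (⋂ v ∈ V, {ω | ¬ ∀ i ∈ S v, X i ω = τ i}) = Y₂ ⁻¹' A₂ := by
      ext ω
      simp only [Set.mem_iInter, Set.mem_preimage, hA₂, hY₂, Set.mem_setOf_eq]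
      refine forall₂_congr fun v hv => not_congr ?_
      constructor
      · intro h i hi; exact h i.1 hi
      · intro h i hi
        exact h ⟨i, Finset.mem_biUnion.mpr ⟨v, hv, hi⟩⟩ hi
    have hindepF := (hindep.indepFun_finset (S v₀) T hST hmeas)
    have hmul : μ (Y₁ ⁻¹' A₁ ∩ Y₂ ⁻¹' A₂) = μ (Y₁ ⁻¹' A₁) * μ (Y₂ ⁻¹' A₂) :=
      hindepF.measure_inter_preimage_eq_mul A₁ A₂
        (measurableSet_pi_bool _) (measurableSet_pi_bool _)
    rw [he₁, he₂, hmul]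
    have hq₁ : μ (Y₁ ⁻¹' A₁) ≤ 1 - (1 / 2 : ENNReal) ^ k := by
      have hAc : Y₁ ⁻¹' A₁ = {ω | ∀ i ∈ S v₀, X i ω = τ i}ᶜ := by
        ext ω; simp [hA₁, hY₁, Subtype.forall]
      rw [hAc, measure_compl (measurableSet_atom hmeas _ _) (measure_ne_top μ _),
        measure_univ, meas_atom hmeas hindep hdist]
      refine tsub_le_tsub_left ?_ 1
      exact pow_le_pow_of_le_one zero_le ENNReal.half_le_self
        (hcard v₀ (Finset.mem_insert_self _ _))
    have hq₂ : μ (Y₂ ⁻¹' A₂) ≤ (1 - (1 / 2 : ENNReal) ^ k) ^ V.card := by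
      rw [← he₂]
      exact ih (fun v hv => hcard v (Finset.mem_insert_of_mem hv))
        (fun v hv v' hv' hne => hdisj v (Finset.mem_insert_of_mem hv) v'
          (Finset.mem_insert_of_mem hv') hne)
    rw [Finset.card_insert_of_notMem hv₀V, pow_succ]
    calc μ (Y₁ ⁻¹' A₁) * μ (Y₂ ⁻¹' A₂) ≤
        (1 - (1 / 2 : ENNReal) ^ k) * ((1 - (1 / 2 : ENNReal) ^ k) ^ V.card) :=
          mul_le_mul' hq₁ hq₂
      _ = (1 - (1 / 2 : ENNReal) ^ k) ^ V.card * (1 - (1 / 2 : ENNReal) ^ k) := mul_comm _ _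


lemma event_bound (hmeas : ∀ i, Measurable (X i))
    (hindep : iIndepFun X μ)
    (hdist : ∀ i, μ {ω | X i ω = true} = 1 / 2)
    {k n : ℕ} (A : Finset (Fin n)) (hA : A.card ≤ k) (A' : Finset (Fin n)) (hA' : A' ⊆ A) :
    μ {ω | ¬ ∃ v, v ∉ A ∧ (∀ a ∈ A', (bitsGraph (fun i => X i ω) n).Adj v a) ∧
        (∀ a ∈ A, a ∉ A' → ¬ (bitsGraph (fun i => X i ω) n).Adj v a)} ≤
      (1 - (1 / 2 : ENNReal) ^ k) ^ (n / (3 * k ^ 2 + k + 1)) := by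
  classical
  obtain ⟨V, hVcard, hV1, hV2, hV3⟩ := greedy A hA
  set S : Fin n → Finset ℕ := fun v => A.image fun a => Nat.dist v.1 a.1 with hS
  set τ : ℕ → Bool := fun i => decide (∃ v ∈ V, ∃ a ∈ A', Nat.dist v.1 a.1 = i) with hτ
  have hτ_spec : ∀ v ∈ V, ∀ a ∈ A, (τ (Nat.dist v.1 a.1) = true ↔ a ∈ A') := by
    intro v hv a ha
    simp only [hτ, decide_eq_true_eq]
    constructor
    · rintro ⟨v', hv', a', ha', hd⟩
      by_cases hvv : v = v'
      · subst hvv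
        by_cases haa : a' = a
        · exact haa ▸ ha'
        · exact absurd hd.symm (hV2 v hv a ha a' (hA' ha') (fun h => haa h.symm))
      · exact absurd hd.symm (hV3 v hv v' hv' hvv a ha a' (hA' ha'))
    · intro ha'; exact ⟨v, hv, a, ha', rfl⟩
  have hsub : {ω | ¬ ∃ v, v ∉ A ∧ (∀ a ∈ A', (bitsGraph (fun i => X i ω) n).Adj v a) ∧
        (∀ a ∈ A, a ∉ A' → ¬ (bitsGraph (fun i => X i ω) n).Adj v a)} ⊆
      ⋂ v ∈ V, {ω | ¬ ∀ i ∈ S v, X i ω = τ i} := by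
    intro ω hω
    simp only [Set.mem_iInter, Set.mem_setOf_eq]
    intro v hv hall
    refine hω ⟨v, hV1 v hv, ?_, ?_⟩
    · intro a ha'
      have ha : a ∈ A := hA' ha'
      have hne : v ≠ a := fun h => hV1 v hv (h ▸ ha)
      refine (⟨hne, ?_⟩ : v ≠ a ∧ _)
      show X (Nat.dist v.1 a.1) ω = true
      rw [hall (Nat.dist v.1 a.1) (Finset.mem_image_of_mem _ ha)]
      exact (hτ_spec v hv a ha).mpr ha'
    · intro a ha hna hadj
      have h2 : X (Nat.dist v.1 a.1) ω = true :=
          (show v ≠ a ∧ X (Nat.dist v.1 a.1) ω = true from hadj).2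
      rw [hall (Nat.dist v.1 a.1) (Finset.mem_image_of_mem _ ha)] at h2
      exact hna ((hτ_spec v hv a ha).mp h2)
  refine le_trans (measure_mono hsub) ?_
  have hcards : ∀ v ∈ V, (S v).card ≤ k := fun v _ =>
    le_trans Finset.card_image_le hA
  have hdisj : ∀ v ∈ V, ∀ v' ∈ V, v ≠ v' → Disjoint (S v) (S v') := by
    intro v hv v' hv' hne
    rw [Finset.disjoint_left]
    intro i hi hi'
    obtain ⟨a, ha, rfl⟩ := Finset.mem_image.mp hi
    obtain ⟨a', ha', hd⟩ := Finset.mem_image.mp hi'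
    exact hV3 v hv v' hv' hne a ha a' ha' hd.symm
  calc μ (⋂ v ∈ V, {ω | ¬ ∀ i ∈ S v, X i ω = τ i}) ≤
      (1 - (1 / 2 : ENNReal) ^ k) ^ V.card :=
        fail_bound hmeas hindep hdist S τ V hcards hdisj
    _ = (1 - (1 / 2 : ENNReal) ^ k) ^ (n / (3 * k ^ 2 + k + 1)) := by rw [hVcard]

/-- Union bound. -/
lemma strong_bound (hmeas : ∀ i, Measurable (X i))
    (hindep : iIndepFun X μ)
    (hdist : ∀ i, μ {ω | X i ω = true} = 1 / 2) (k n : ℕ) :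
    μ {ω | ¬ ExtendsA k (bitsGraph (fun i => X i ω) n)} ≤
      ((k + 1 : ℕ) : ENNReal) * (((n + 1) ^ k : ℕ) : ENNReal) * 2 ^ k *
        (1 - (1 / 2 : ENNReal) ^ k) ^ (n / (3 * k ^ 2 + k + 1)) := by
  classical
  set q : ENNReal := (1 - (1 / 2 : ENNReal) ^ k) ^ (n / (3 * k ^ 2 + k + 1)) with hq
  set P : Finset (Finset (Fin n)) := Finset.univ.powerset.filter fun A => A.card ≤ k with hP
  set E : Finset (Fin n) → Finset (Fin n) → Set Ω := fun A A' =>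
    {ω | ¬ ∃ v, v ∉ A ∧ (∀ a ∈ A', (bitsGraph (fun i => X i ω) n).Adj v a) ∧
        (∀ a ∈ A, a ∉ A' → ¬ (bitsGraph (fun i => X i ω) n).Adj v a)} with hE
  have hsub : {ω | ¬ ExtendsA k (bitsGraph (fun i => X i ω) n)} ⊆
      ⋃ A ∈ P, ⋃ A' ∈ A.powerset, E A A' := by
    intro ω hω
    simp only [Set.mem_setOf_eq, ExtendsA, not_forall] at hω
    obtain ⟨A, hAcard, A', hA', hno⟩ := hω
    simp only [Set.mem_iUnion]
    exact ⟨A, Finset.mem_filter.mpr ⟨Finset.mem_powerset.mpr (Finset.subset_univ A), hAcard⟩,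
      A', Finset.mem_powerset.mpr hA', hno⟩
  refine le_trans (measure_mono hsub) ?_
  refine le_trans (measure_biUnion_finset_le P _) ?_
  have hinner : ∀ A ∈ P, μ (⋃ A' ∈ A.powerset, E A A') ≤ (2 ^ k : ENNReal) * q := by
    intro A hA
    obtain ⟨-, hAcard⟩ := Finset.mem_filter.mp hA
    refine le_trans (measure_biUnion_finset_le A.powerset _) ?_
    have : ∀ A' ∈ A.powerset, μ (E A A') ≤ q := by
      intro A' hA'
      exact event_bound hmeas hindep hdist A hAcard A' (Finset.mem_powerset.mp hA')
    refine le_trans (Finset.sum_le_sum this) ?_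
    rw [Finset.sum_const, Finset.card_powerset, nsmul_eq_mul]
    refine mul_le_mul' ?_ le_rfl
    norm_cast
    exact Nat.pow_le_pow_right (by norm_num) hAcard
  refine le_trans (Finset.sum_le_sum hinner) ?_
  rw [Finset.sum_const, nsmul_eq_mul]
  have hPcard : (P.card : ENNReal) ≤ ((k + 1 : ℕ) : ENNReal) * (((n + 1) ^ k : ℕ) : ENNReal) := by
    norm_cast
    have hsubP : P ⊆ (Finset.range (k + 1)).biUnion fun j => Finset.univ.powersetCard j := by
      intro A hA
      obtain ⟨-, hAcard⟩ := Finset.mem_filter.mp hA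
      refine Finset.mem_biUnion.mpr ⟨A.card, Finset.mem_range.mpr (by omega), ?_⟩
      exact Finset.mem_powersetCard.mpr ⟨Finset.subset_univ A, rfl⟩
    refine le_trans (Finset.card_le_card hsubP) ?_
    refine le_trans (Finset.card_biUnion_le) ?_
    have : ∀ j ∈ Finset.range (k + 1), (Finset.univ.powersetCard j (α := Fin n)).card
        ≤ (n + 1) ^ k := by
      intro j hj
      rw [Finset.card_powersetCard, Finset.card_univ, Fintype.card_fin]
      calc n.choose j ≤ n ^ j := Nat.choose_le_pow n j
        _ ≤ (n + 1) ^ j := Nat.pow_le_pow_left (by omega) j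
        _ ≤ (n + 1) ^ k := Nat.pow_le_pow_right (by omega) (Nat.lt_succ_iff.mp (Finset.mem_range.mp hj))
    refine le_trans (Finset.sum_le_sum this) ?_
    rw [Finset.sum_const, Finset.card_range, smul_eq_mul]
  calc (P.card : ENNReal) * ((2 ^ k : ENNReal) * q) ≤
      (((k + 1 : ℕ) : ENNReal) * (((n + 1) ^ k : ℕ) : ENNReal)) * ((2 ^ k : ENNReal) * q) :=
        mul_le_mul' hPcard le_rfl
    _ = ((k + 1 : ℕ) : ENNReal) * (((n + 1) ^ k : ℕ) : ENNReal) * 2 ^ k * q := by ring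


lemma real_summable (k c : ℕ) (hc : 0 < c) {r : ℝ} (hr0 : 0 ≤ r) (hr1 : r < 1) :
    Summable (fun n : ℕ => ((n : ℝ) + 1) ^ k * r ^ (n / c)) := by
  rcases eq_or_lt_of_le hr0 with hr | hr
  · -- r = 0
    apply summable_of_ne_finset_zero (s := Finset.range c)
    intro n hn
    rw [Finset.mem_range, not_lt] at hn
    have : 0 < n / c := Nat.one_le_div_iff hc |>.mpr hn
    rw [← hr, zero_pow (by omega), mul_zero]
  · obtain ⟨t, ht0, ht1, htc⟩ : ∃ t : ℝ, 0 < t ∧ t < 1 ∧ t ^ c = r := by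
      refine ⟨r ^ ((c : ℝ)⁻¹), Real.rpow_pos_of_pos hr _,
        Real.rpow_lt_one hr0 hr1 (by positivity), ?_⟩
      rw [← Real.rpow_natCast (r ^ ((c:ℝ)⁻¹)) c, ← Real.rpow_mul hr0,
        inv_mul_cancel₀ (by positivity), Real.rpow_one]
    have hsum1 : Summable (fun n : ℕ => ((n : ℝ) + 1) ^ k * t ^ n) := by
      have hbase : Summable (fun m : ℕ => (m : ℝ) ^ k * t ^ m) :=
        summable_pow_mul_geometric_of_norm_lt_one k (by rwa [Real.norm_eq_abs, abs_of_pos ht0])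
      have hshift : Summable (fun n : ℕ => ((n + 1 : ℕ) : ℝ) ^ k * t ^ (n + 1)) :=
        (summable_nat_add_iff (f := fun m : ℕ => (m : ℝ) ^ k * t ^ m) 1).mpr hbase
      have := hshift.mul_left (1 / t)
      refine this.congr fun n => ?_
      push_cast
      rw [pow_succ]
      field_simp
    have hsum2 : Summable (fun n : ℕ => if n < c then ((n : ℝ) + 1) ^ k * r ^ (n / c) else 0) := by
      apply summable_of_ne_finset_zero (s := Finset.range c)
      intro n hn
      rw [Finset.mem_range, not_lt] at hn
      rw [if_neg (not_lt.mpr hn)]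
    have hsum3 : Summable (fun n : ℕ => 1 / r * (((n : ℝ) + 1) ^ k * t ^ n) +
        (if n < c then ((n : ℝ) + 1) ^ k * r ^ (n / c) else 0)) :=
      (hsum1.mul_left (1 / r)).add hsum2
    have hnn : ∀ n : ℕ, 0 ≤ ((n : ℝ) + 1) ^ k * r ^ (n / c) := fun n =>
      mul_nonneg (pow_nonneg (add_nonneg (Nat.cast_nonneg n) zero_le_one) k)
        (pow_nonneg hr0 _)
    refine Summable.of_nonneg_of_le hnn (fun n => ?_) hsum3
    by_cases hn : n < c
    · simp only [hn, if_true]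
      refine le_add_of_nonneg_left ?_
      exact mul_nonneg (one_div_nonneg.mpr (le_of_lt hr))
        (mul_nonneg (pow_nonneg (add_nonneg (Nat.cast_nonneg n) zero_le_one) k)
          (pow_nonneg (le_of_lt ht0) _))
    · simp only [hn, if_false, add_zero]
      push_neg at hn
      have key : r ^ (n / c) ≤ t ^ n / r := by
        have h2 : n - c ≤ c * (n / c) := by
          have hd := Nat.div_add_mod n c
          have hm := Nat.mod_lt n hc
          omega
        calc r ^ (n / c) = t ^ (c * (n / c)) := by rw [pow_mul, htc]
          _ ≤ t ^ (n - c) := pow_le_pow_of_le_one (le_of_lt ht0) (le_of_lt ht1) h2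
          _ = t ^ n / t ^ c := by rw [pow_sub₀ t (ne_of_gt ht0) hn, div_eq_mul_inv]
          _ = t ^ n / r := by rw [htc]
      calc ((n : ℝ) + 1) ^ k * r ^ (n / c) ≤ ((n : ℝ) + 1) ^ k * (t ^ n / r) := by
            refine mul_le_mul_of_nonneg_left key (by positivity)
        _ = 1 / r * (((n : ℝ) + 1) ^ k * t ^ n) := by ring

lemma enn_tsum_ne_top (k : ℕ) :
    (∑' n : ℕ, ((k + 1 : ℕ) : ENNReal) * (((n + 1) ^ k : ℕ) : ENNReal) * 2 ^ k *
      (1 - (1 / 2 : ENNReal) ^ k) ^ (n / (3 * k ^ 2 + k + 1))) ≠ ⊤ := by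
  set c := 3 * k ^ 2 + k + 1 with hc
  have hc0 : 0 < c := by positivity
  set r : ℝ := 1 - (1 / 2 : ℝ) ^ k with hr
  have hr0 : 0 ≤ r := by
    rw [hr]
    have : (1 / 2 : ℝ) ^ k ≤ 1 := pow_le_one₀ (by norm_num) (by norm_num)
    linarith
  have hr1 : r < 1 := by
    rw [hr]
    have : (0:ℝ) < (1 / 2 : ℝ) ^ k := by positivity
    linarith
  have hq : (1 - (1 / 2 : ENNReal) ^ k) = ENNReal.ofReal r := by
    rw [hr, ENNReal.ofReal_sub _ (by positivity), ENNReal.ofReal_one]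
    congr 1
    rw [ENNReal.ofReal_pow (by norm_num)]
    congr 1
    rw [ENNReal.ofReal_div_of_pos (by norm_num), ENNReal.ofReal_one, ENNReal.ofReal_ofNat]
  have hterm : ∀ n : ℕ, ((k + 1 : ℕ) : ENNReal) * (((n + 1) ^ k : ℕ) : ENNReal) * 2 ^ k *
      (1 - (1 / 2 : ENNReal) ^ k) ^ (n / c) =
      ENNReal.ofReal (((k + 1 : ℕ) : ℝ) * 2 ^ k) *
        ENNReal.ofReal (((n : ℝ) + 1) ^ k * r ^ (n / c)) := by
    intro n
    have e1 : ((k + 1 : ℕ) : ENNReal) = ENNReal.ofReal ((k + 1 : ℕ) : ℝ) :=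
      (ENNReal.ofReal_natCast _).symm
    have e2 : (2 : ENNReal) ^ k = ENNReal.ofReal ((2 : ℝ) ^ k) := by
      rw [ENNReal.ofReal_pow (by norm_num), ENNReal.ofReal_ofNat]
    have e3 : (((n + 1) ^ k : ℕ) : ENNReal) = ENNReal.ofReal (((n : ℝ) + 1) ^ k) := by
      rw [ENNReal.ofReal_pow (by positivity),
        show ((n : ℝ) + 1) = ((n + 1 : ℕ) : ℝ) by push_cast; ring, ENNReal.ofReal_natCast]
      norm_cast
    rw [hq, ← ENNReal.ofReal_pow hr0, e1, e2, e3,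
      ENNReal.ofReal_mul (by positivity), ENNReal.ofReal_mul (by positivity)]
    ring
  rw [tsum_congr hterm, ENNReal.tsum_mul_left]
  refine ENNReal.mul_ne_top ENNReal.ofReal_ne_top ?_
  rw [← ENNReal.ofReal_tsum_of_nonneg (fun n => by positivity)
    (real_summable k c hc0 hr0 hr1)]
  exact ENNReal.ofReal_ne_top


open MeasureTheory in
/-- Let `p̄_rand` be a random zero-one sequence, i.e. a sequence `X` of
independent random bits each equal to `1` with probability `1/2`.  Then almost surely: for
every `k` the graph `G(n, p̄_rand)` has the property `𝒜_k` for all sufficiently large `n`;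
consequently, almost surely the truth value of every first-order sentence of the language
`L` in `G(n, p̄_rand)` is eventually constant in `n`, i.e. a zero-one law holds. -/
theorem statement_19 {Ω : Type} [MeasurableSpace Ω] (μ : Measure Ω)
    [IsProbabilityMeasure μ] (X : ℕ → Ω → Bool) (hmeas : ∀ i, Measurable (X i))
    (hindep : ProbabilityTheory.iIndepFun X μ)
    (hdist : ∀ i, μ {ω | X i ω = true} = 1 / 2) :
    ∀ᵐ ω ∂μ,
      (∀ k : ℕ, ∃ n₀ : ℕ, ∀ n ≥ n₀, HasPropA k (bitsGraph (fun i => X i ω) n)) ∧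
      ∀ ψ : Language.graph.Sentence,
        (∀ᶠ n : ℕ in atTop,
          @Language.Sentence.Realize _ _ (bitsGraph (fun i => X i ω) n).structure ψ) ∨
        (∀ᶠ n : ℕ in atTop,
          ¬ @Language.Sentence.Realize _ _ (bitsGraph (fun i => X i ω) n).structure ψ) := by
  classical
  have hBC : ∀ k : ℕ, ∀ᵐ ω ∂μ, ∀ᶠ n in atTop,
      ExtendsA k (bitsGraph (fun i => X i ω) n) := by
    intro k
    have hsum : (∑' n : ℕ, μ {ω | ¬ ExtendsA k (bitsGraph (fun i => X i ω) n)}) ≠ ⊤ := by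
      refine ne_top_of_le_ne_top (enn_tsum_ne_top k) (ENNReal.tsum_le_tsum fun n => ?_)
      exact strong_bound hmeas hindep hdist k n
    have h2 := MeasureTheory.ae_eventually_notMem (μ := μ)
      (s := fun n => {ω | ¬ ExtendsA k (bitsGraph (fun i => X i ω) n)}) hsum
    filter_upwards [h2] with ω hω
    exact hω.mono fun n hn => not_not.mp hn
  have hae := (MeasureTheory.ae_all_iff).mpr hBC
  filter_upwards [hae] with ω hω
  refine ⟨?_, ?_⟩
  · intro k
    obtain ⟨n₀, hn₀⟩ := Filter.eventually_atTop.mp (hω k)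
    refine ⟨n₀, fun n hn => ?_⟩
    intro A hA A' hA'
    obtain ⟨v, _, h2, h3⟩ := hn₀ n hn A (le_of_eq hA) A' hA'
    exact ⟨v, h2, h3⟩
  · intro ψ
    obtain ⟨n₀, hn₀⟩ := Filter.eventually_atTop.mp (hω (qd ψ))
    have hiff : ∀ n ≥ n₀,
        ((@Language.Sentence.Realize _ _ (bitsGraph (fun i => X i ω) n).structure ψ) ↔
          (@Language.Sentence.Realize _ _ (bitsGraph (fun i => X i ω) n₀).structure ψ)) :=
      fun n hn => ef_sentence ψ le_rfl (hn₀ n hn) (hn₀ n₀ le_rfl)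
    by_cases hsat : @Language.Sentence.Realize _ _ (bitsGraph (fun i => X i ω) n₀).structure ψ
    · left
      exact Filter.eventually_atTop.mpr ⟨n₀, fun n hn => (hiff n hn).mpr hsat⟩
    · right
      exact Filter.eventually_atTop.mpr ⟨n₀, fun n hn => fun h => hsat ((hiff n hn).mp h)⟩

end RandomGraph
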